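/- Let n ≥ 1 be an integer, δ ≥ 0 a real number, and x, y : Fin n → ℝ with x_i > 0, y_i ≥ 0, and |y_i − x_i| ≤ δ for every i. Then (∏_i y_i)^{1/n} ≤ (∏_i x_i)^{1/n} · (1 + (δ/n) · Σ_i 1/x_i). -/
import Mathlib


/-- Geometric-mean comparison for pointwise `δ`-close families of positive reals. -/
theorem stmt3 (n : ℕ) (hn : 1 ≤ n) (δ : ℝ) (hδ : 0 ≤ δ)
    (x y : Fin n → ℝ) (hx : ∀ i, 0 < x i) (hy : ∀ i, 0 ≤ y i)
    (hxy : ∀ i, |y i - x i| ≤ δ) :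
    (∏ i, y i) ^ ((1 : ℝ) / n) ≤
      (∏ i, x i) ^ ((1 : ℝ) / n) * (1 + (δ / n) * ∑ i, 1 / x i) := by
  have hn0 : (0:ℝ) < n := by positivity
  set z : Fin n → ℝ := fun i => 1 + δ / x i with hz
  have hz0 : ∀ i, 0 ≤ z i := fun i => by
    have := (hx i).le; positivity
  have hle : ∀ i, y i ≤ x i * z i := by
    intro i
    have h := (abs_le.mp (hxy i)).2
    have : x i * z i = x i + δ := by
      simp only [hz, mul_add, mul_one]
      rw [mul_div_cancel₀ _ (hx i).ne']
    linarith
  have h1 : (∏ i, y i) ^ ((1:ℝ)/n) ≤ (∏ i, x i * z i) ^ ((1:ℝ)/n) := by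
    apply Real.rpow_le_rpow (Finset.prod_nonneg fun i _ => hy i)
    · exact Finset.prod_le_prod (fun i _ => hy i) (fun i _ => hle i)
    · positivity
  have h2 : (∏ i, x i * z i) ^ ((1:ℝ)/n)
      = (∏ i, x i) ^ ((1:ℝ)/n) * (∏ i, z i) ^ ((1:ℝ)/n) := by
    rw [Finset.prod_mul_distrib,
      Real.mul_rpow (Finset.prod_nonneg fun i _ => (hx i).le)
        (Finset.prod_nonneg fun i _ => hz0 i)]
  have h3 : (∏ i, z i) ^ ((1:ℝ)/n) ≤ 1 + (δ / n) * ∑ i, 1 / x i := by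
    have hw : ∑ _i : Fin n, ((1:ℝ)/n) = 1 := by
      simp [Finset.sum_const]
      field_simp
    have := Real.geom_mean_le_arith_mean_weighted Finset.univ
      (fun _ => (1:ℝ)/n) z (fun i _ => by positivity) hw (fun i _ => hz0 i)
    have hprod : ∏ i, z i ^ ((1:ℝ)/n) = (∏ i, z i) ^ ((1:ℝ)/n) := by
      rw [← Real.finset_prod_rpow _ _ (fun i _ => hz0 i)]
    have hsum : ∑ i : Fin n, (1:ℝ)/n * z i = 1 + (δ / n) * ∑ i, 1 / x i := by
      simp only [hz, mul_add, mul_one, Finset.sum_add_distrib, Finset.sum_const,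
        Finset.card_univ, Fintype.card_fin, nsmul_eq_mul, Finset.mul_sum]
      rw [mul_one_div, div_self hn0.ne']
      congr 1
      apply Finset.sum_congr rfl
      intro i _
      ring
    rw [hprod] at this
    rw [← hsum]
    exact this
  calc (∏ i, y i) ^ ((1:ℝ)/n) ≤ (∏ i, x i) ^ ((1:ℝ)/n) * (∏ i, z i) ^ ((1:ℝ)/n) := by
        rw [← h2]; exact h1
    _ ≤ (∏ i, x i) ^ ((1:ℝ)/n) * (1 + (δ / n) * ∑ i, 1 / x i) := by
        apply mul_le_mul_of_nonneg_left h3 (Real.rpow_nonneg (Finset.prod_nonneg fun i _ => (hx i).le) _)
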